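/- Let G be a graph with a perfect matching M, and let S ⊆ E(G)\M. Then S is an anti-forcing set of M if and only if G ⊖ S is the empty graph, where G ⊖ S is obtained from G − S by deleting the endpoints of all edges forced by S and deleting all edges anti-forced by S. -/
import Mathlib


namespace AF

variable {V : Type*}

/-- `M` is (the edge set of) a perfect matching of `G`. -/
def IsPM (G : SimpleGraph V) (M : Set (Sym2 V)) : Prop :=
  M ⊆ G.edgeSet ∧ ∀ v : V, ∃! e, e ∈ M ∧ v ∈ e

/-- `S` is an anti-forcing set of the perfect matching `M`:
`S ⊆ E(G) \ M` and `G - S` has `M` as its unique perfect matching. -/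
def IsAntiforcing (G : SimpleGraph V) (M S : Set (Sym2 V)) : Prop :=
  S ⊆ G.edgeSet \ M ∧ IsPM (G.deleteEdges S) M ∧
    ∀ N, IsPM (G.deleteEdges S) N → N = M

/-- The anti-forcing number `af(G,M)`. -/
noncomputable def af (G : SimpleGraph V) (M : Set (Sym2 V)) : ℕ :=
  sInf {n | ∃ S : Set (Sym2 V), S.Finite ∧ S.ncard = n ∧ IsAntiforcing G M S}

/-- The anti-forcing polynomial `Af(G,x) = ∑_M x^{af(G,M)}`. -/
noncomputable def AfPoly (G : SimpleGraph V) : Polynomial ℤ :=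
  ∑ᶠ M ∈ {M : Set (Sym2 V) | IsPM G M}, (Polynomial.X : Polynomial ℤ) ^ af G M

/-- The anti-forcing spectrum of `G`. -/
def Spectrum (G : SimpleGraph V) : Set ℕ :=
  {n | ∃ M, IsPM G M ∧ af G M = n}

/-- `c` is an `M`-alternating cycle: a cycle whose edges alternate
(cyclically) between `M` and its complement. -/
def IsAltCycle (G : SimpleGraph V) (M : Set (Sym2 V)) {v : V} (c : G.Walk v v) : Prop :=
  c.IsCycle ∧ ∀ i : Fin c.edges.length,
    (c.edges.get i ∈ M ↔
      c.edges.get ⟨((i : ℕ) + 1) % c.edges.length, Nat.mod_lt _ i.pos⟩ ∉ M)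

/-- A compatible `M`-alternating set, given as a family of edge sets of
`M`-alternating cycles which pairwise intersect only in edges of `M`. -/
def IsCompatibleAltSet (G : SimpleGraph V) (M : Set (Sym2 V))
    (𝒞 : Set (Set (Sym2 V))) : Prop :=
  (∀ C ∈ 𝒞, ∃ (v : V) (c : G.Walk v v), IsAltCycle G M c ∧ {e | e ∈ c.edges} = C) ∧
  (∀ C ∈ 𝒞, ∀ D ∈ 𝒞, C ≠ D → C ∩ D ⊆ M)

/-- `c'(G,M)`: the maximum cardinality of a compatible `M`-alternating set. -/
noncomputable def cmax (G : SimpleGraph V) (M : Set (Sym2 V)) : ℕ :=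
  sSup {n | ∃ 𝒞 : Set (Set (Sym2 V)), 𝒞.Finite ∧ 𝒞.ncard = n ∧ IsCompatibleAltSet G M 𝒞}

/-- The edge `e` of `G - S` is forced by `S`: it belongs to every
perfect matching of `G - S`. -/
def ForcedBy (G : SimpleGraph V) (S : Set (Sym2 V)) (e : Sym2 V) : Prop :=
  e ∈ (G.deleteEdges S).edgeSet ∧ ∀ N, IsPM (G.deleteEdges S) N → e ∈ N

/-- The edge `e` of `G - S` is anti-forced by `S`: it belongs to no
perfect matching of `G - S`. -/
def AntiForcedBy (G : SimpleGraph V) (S : Set (Sym2 V)) (e : Sym2 V) : Prop :=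
  e ∈ (G.deleteEdges S).edgeSet ∧ ∀ N, IsPM (G.deleteEdges S) N → e ∉ N

/-- The vertices of `G ⊖ S`: delete the endpoints of every forced edge. -/
def ominusVerts (G : SimpleGraph V) (S : Set (Sym2 V)) : Set V :=
  {v | ¬ ∃ e, ForcedBy G S e ∧ v ∈ e}

/-- The graph `G ⊖ S`: from `G - S` delete all anti-forced edges and the
endpoints of all forced edges. -/
def ominus (G : SimpleGraph V) (S : Set (Sym2 V)) :
    SimpleGraph ↥(ominusVerts G S) :=
  (G.deleteEdges (S ∪ {e | AntiForcedBy G S e})).induce (ominusVerts G S)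

/-- Restriction of an edge set of `G` to a graph on a subtype of `V`. -/
def restrictEdges (W : Set V) (M : Set (Sym2 V)) : Set (Sym2 ↥W) :=
  {e | Sym2.map (Subtype.val) e ∈ M}

/-- Positions of hexagons, in the "brick wall" model of the hexagonal lattice:
vertices are `ℤ × ℤ`; the hexagon at position `p` (with `p.1 + p.2` even) has
vertex set `{p, p+(1,0), p+(2,0), p+(0,1), p+(1,1), p+(2,1)}`. -/
abbrev HexPos := ℤ × ℤ

def hexVerts (p : HexPos) : Set (ℤ × ℤ) :=
  {p, p + (1,0), p + (2,0), p + (0,1), p + (1,1), p + (2,1)}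

def hexEdges (p : HexPos) : Set (Sym2 (ℤ × ℤ)) :=
  {s(p, p + (1,0)), s(p + (1,0), p + (2,0)), s(p + (0,1), p + (1,1)),
   s(p + (1,1), p + (2,1)), s(p, p + (0,1)), s(p + (2,0), p + (2,1))}

/-- The vertex set used by a set `H` of hexagons. -/
def hexVertexSet (H : Set HexPos) : Set (ℤ × ℤ) := ⋃ p ∈ H, hexVerts p

/-- The hexagonal system determined by a set `H` of hexagon positions,
as a graph on its own vertex set. -/
def hexSystemGraph (H : Set HexPos) : SimpleGraph ↥(hexVertexSet H) :=
  (SimpleGraph.fromEdgeSet (⋃ p ∈ H, hexEdges p)).induce (hexVertexSet H)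

/-- Two hexagon positions sharing an edge. -/
def HexAdj (p q : HexPos) : Prop :=
  q - p ∈ ({(2,0), (-2,0), (1,1), (-1,-1), (1,-1), (-1,1)} : Set HexPos)

/-- The dual (inner) graph of a set of hexagons. -/
def dualGraph (H : Set HexPos) : SimpleGraph ↥H :=
  SimpleGraph.fromRel fun a b => HexAdj a.1 b.1

/-- `H` is a catacondensed hexagonal system: finitely many hexagons on the
even lattice positions whose dual graph is a (nonempty) tree. -/
def IsCatacondensed (H : Set HexPos) : Prop :=
  H.Finite ∧ H.Nonempty ∧ (∀ p ∈ H, Even (p.1 + p.2)) ∧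
    (dualGraph H).Connected ∧ (dualGraph H).IsAcyclic

/-- The three axis directions of linear chains. -/
def hexDirs : Set HexPos := {(2,0), (1,1), (1,-1)}

/-- All six directions in which a linear segment may proceed. -/
def hexDirsAll : Set HexPos := {(2,0), (-2,0), (1,1), (-1,-1), (1,-1), (-1,1)}

/-- The vertical edge of the hexagon at `p` associated to the linear
direction `d ∈ hexDirs`: the edge of that hexagon crossed by the line of
centers, on the side of `-d`.  For a linear chain `p, p+d, …, p+n•d` the
vertical edges are exactly `vEdge d (p + k•d)` for `0 ≤ k ≤ n+1`. -/
def vEdge (d p : HexPos) : Sym2 (ℤ × ℤ) :=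
  if d = (2,0) then s(p, p + (0,1))
  else if d = (1,1) then s(p, p + (1,0))
  else s(p + (0,1), p + (1,1))

/-- Starting positions of the segments of a hexagonal chain with segment
lengths `L`, segment directions `d`, and initial hexagon `p0`; consecutive
segments share their kink hexagon. -/
def segStart (d : ℕ → HexPos) (p0 : HexPos) (L : List ℕ) : ℕ → HexPos
  | 0 => p0
  | i + 1 => segStart d p0 L i + (L.getD i 1 - 1) • d i

/-- The set of hexagons of the hexagonal chain with segment lengths `L`. -/
def chainSet (d : ℕ → HexPos) (p0 : HexPos) (L : List ℕ) : Set HexPos :=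
  {q | ∃ i < L.length, ∃ k < L.getD i 0, q = segStart d p0 L i + k • d i}

/-- Replace the last entry `m` of a list by `m - 1`. -/
def decLast (L : List ℕ) : List ℕ :=
  L.dropLast ++ (L.getLast?.elim [] fun m => [m - 1])

/-- The linear hexagonal chain with `n` hexagons. -/
def linChain (n : ℕ) : Set HexPos :=
  {q | ∃ k < n, q = ((2 * (k : ℤ), 0) : HexPos)}


/-- `S` is an anti-forcing set of `M` iff `G ⊖ S` is the empty
graph (all of its vertices have been deleted). -/
theorem isAntiforcing_iff_ominus_empty {V : Type*} [Fintype V]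
    (G : SimpleGraph V) (M : Set (Sym2 V)) (hM : IsPM G M)
    (S : Set (Sym2 V)) (hS : S ⊆ G.edgeSet \ M) :
    IsAntiforcing G M S ↔ ominusVerts G S = ∅ := by
  constructor
  · rintro ⟨hS', hPM, huniq⟩
    ext v
    simp only [ominusVerts, Set.mem_setOf_eq, Set.mem_empty_iff_false, iff_false, not_not]
    obtain ⟨e, ⟨heM, hve⟩, -⟩ := hPM.2 v
    refine ⟨e, ⟨hPM.1 heM, fun N hN => ?_⟩, hve⟩
    rw [huniq N hN]; exact heM
  · intro h
    have hMsub : M ⊆ (G.deleteEdges S).edgeSet := by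
      intro e he
      rw [SimpleGraph.edgeSet_deleteEdges]
      exact ⟨hM.1 he, fun heS => (hS heS).2 he⟩
    have hPM : IsPM (G.deleteEdges S) M := ⟨hMsub, hM.2⟩
    refine ⟨hS, hPM, fun N hN => ?_⟩
    -- every vertex lies on a forced edge
    have hforced : ∀ v : V, ∃ e, ForcedBy G S e ∧ v ∈ e := by
      intro v
      by_contra hc
      have : v ∈ ominusVerts G S := hc
      rw [h] at this
      exact this
    ext f
    constructor
    · intro hfN
      induction f with
      | h a b =>
        obtain ⟨e, he, hae⟩ := hforced a
        have heN : e ∈ N := he.2 N hN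
        have heM : e ∈ M := he.2 M hPM
        obtain ⟨e', -, huN⟩ := hN.2 a
        have h1 : s(a, b) = e' := huN _ ⟨hfN, Sym2.mem_mk_left a b⟩
        have h2 : e = e' := huN _ ⟨heN, hae⟩
        rw [h1, ← h2]; exact heM
    · intro hfM
      induction f with
      | h a b =>
        obtain ⟨e, he, hae⟩ := hforced a
        have heN : e ∈ N := he.2 N hN
        have heM : e ∈ M := he.2 M hPM
        obtain ⟨e', -, huM⟩ := hM.2 a
        have h1 : s(a, b) = e' := huM _ ⟨hfM, Sym2.mem_mk_left a b⟩
        have h2 : e = e' := huM _ ⟨heM, hae⟩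
        rw [h1, ← h2]; exact heN

end AF
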